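/- On ℝ⁷ with the standard G₂ 3-form φ, for a linear endomorphism A of ℝ⁷ define the alternating 3-form A·φ by (A·φ)(x,y,z) = φ(Ax,y,z) + φ(x,Ay,z) + φ(x,y,Az). Then the space g₂ := {A : A skew-symmetric and A·φ = 0} (the Lie algebra of the stabilizer G₂ of φ) has dimension 14 as a real vector space. -/
import Mathlib


open scoped BigOperators

noncomputable section

/-- ℝ⁷ as the space of functions `Fin 7 → ℝ` (indices in ℤ/7ℤ). -/
abbrev V7 : Type := Fin 7 → ℝ

/-- The standard inner product on ℝ⁷. -/
def ip7 (x y : V7) : ℝ := ∑ i, x i * y i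

/-- The standard orthonormal basis vector `e_i`. -/
def e7 (i : Fin 7) : V7 := fun j => if j = i then 1 else 0

/-- The G₂ fundamental 3-form `φ = ∑_{i∈ℤ/7} eⁱ ∧ e^{i+1} ∧ e^{i+3}`
(each wedge of covectors in the determinant convention). -/
def φ7 (x y z : V7) : ℝ :=
  ∑ i : Fin 7,
    (x i * y (i + 1) * z (i + 3) - x i * y (i + 3) * z (i + 1)
      - x (i + 1) * y i * z (i + 3) + x (i + 1) * y (i + 3) * z i
      + x (i + 3) * y i * z (i + 1) - x (i + 3) * y (i + 1) * z i)

/-- The 4-form `∗φ = −∑_{i∈ℤ/7} e^{i+2} ∧ e^{i+4} ∧ e^{i+5} ∧ e^{i+6}`. -/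
def sφ7 (x y z u : V7) : ℝ :=
  -∑ i : Fin 7,
    Matrix.det !![x (i + 2), x (i + 4), x (i + 5), x (i + 6);
                  y (i + 2), y (i + 4), y (i + 5), y (i + 6);
                  z (i + 2), z (i + 4), z (i + 5), z (i + 6);
                  u (i + 2), u (i + 4), u (i + 5), u (i + 6)]

lemma φ7_add₁ (u v y z : V7) : φ7 (u + v) y z = φ7 u y z + φ7 v y z := by
  simp only [φ7, Pi.add_apply, ← Finset.sum_add_distrib]
  exact Finset.sum_congr rfl fun i _ => by ring

lemma φ7_add₂ (x u v z : V7) : φ7 x (u + v) z = φ7 x u z + φ7 x v z := by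
  simp only [φ7, Pi.add_apply, ← Finset.sum_add_distrib]
  exact Finset.sum_congr rfl fun i _ => by ring

lemma φ7_add₃ (x y u v : V7) : φ7 x y (u + v) = φ7 x y u + φ7 x y v := by
  simp only [φ7, Pi.add_apply, ← Finset.sum_add_distrib]
  exact Finset.sum_congr rfl fun i _ => by ring

lemma φ7_smul₁ (c : ℝ) (u y z : V7) : φ7 (c • u) y z = c * φ7 u y z := by
  simp only [φ7, Pi.smul_apply, smul_eq_mul, Finset.mul_sum]
  exact Finset.sum_congr rfl fun i _ => by ring

lemma φ7_smul₂ (c : ℝ) (x u z : V7) : φ7 x (c • u) z = c * φ7 x u z := by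
  simp only [φ7, Pi.smul_apply, smul_eq_mul, Finset.mul_sum]
  exact Finset.sum_congr rfl fun i _ => by ring

lemma φ7_smul₃ (c : ℝ) (x y u : V7) : φ7 x y (c • u) = c * φ7 x y u := by
  simp only [φ7, Pi.smul_apply, smul_eq_mul, Finset.mul_sum]
  exact Finset.sum_congr rfl fun i _ => by ring

lemma ip7_add_left (u v y : V7) : ip7 (u + v) y = ip7 u y + ip7 v y := by
  simp only [ip7, Pi.add_apply, ← Finset.sum_add_distrib]
  exact Finset.sum_congr rfl fun i _ => by ring

lemma ip7_add_right (x u v : V7) : ip7 x (u + v) = ip7 x u + ip7 x v := by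
  simp only [ip7, Pi.add_apply, ← Finset.sum_add_distrib]
  exact Finset.sum_congr rfl fun i _ => by ring

lemma ip7_smul_left (c : ℝ) (u y : V7) : ip7 (c • u) y = c * ip7 u y := by
  simp only [ip7, Pi.smul_apply, smul_eq_mul, Finset.mul_sum]
  exact Finset.sum_congr rfl fun i _ => by ring

lemma ip7_smul_right (c : ℝ) (x u : V7) : ip7 x (c • u) = c * ip7 x u := by
  simp only [ip7, Pi.smul_apply, smul_eq_mul, Finset.mul_sum]
  exact Finset.sum_congr rfl fun i _ => by ring

/-- The Lie algebra `g₂` of the stabilizer of `φ`: skew-symmetric endomorphisms `A`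
of ℝ⁷ with `A·φ = 0`, where `(A·φ)(x,y,z) = φ(Ax,y,z) + φ(x,Ay,z) + φ(x,y,Az)`. -/
def g2 : Submodule ℝ (V7 →ₗ[ℝ] V7) where
  carrier := {A | (∀ x y : V7, ip7 (A x) y = -ip7 x (A y)) ∧
    (∀ x y z : V7, φ7 (A x) y z + φ7 x (A y) z + φ7 x y (A z) = 0)}
  zero_mem' := by
    constructor <;> intros <;> simp [ip7, φ7]
  add_mem' := by
    rintro A B ⟨hA1, hA2⟩ ⟨hB1, hB2⟩
    refine ⟨fun x y => ?_, fun x y z => ?_⟩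
    · rw [LinearMap.add_apply, ip7_add_left, LinearMap.add_apply, ip7_add_right]
      have h1 := hA1 x y
      have h2 := hB1 x y
      linarith
    · rw [LinearMap.add_apply, LinearMap.add_apply, LinearMap.add_apply,
        φ7_add₁, φ7_add₂, φ7_add₃]
      have h1 := hA2 x y z
      have h2 := hB2 x y z
      linarith
  smul_mem' := by
    rintro c A ⟨hA1, hA2⟩
    refine ⟨fun x y => ?_, fun x y z => ?_⟩
    · rw [LinearMap.smul_apply, ip7_smul_left, LinearMap.smul_apply, ip7_smul_right]
      have h1 := hA1 x y
      linear_combination c * h1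
    · rw [LinearMap.smul_apply, LinearMap.smul_apply, LinearMap.smul_apply,
        φ7_smul₁, φ7_smul₂, φ7_smul₃]
      have h1 := hA2 x y z
      linear_combination c * h1

set_option maxHeartbeats 2000000


def gen0 : V7 →ₗ[ℝ] V7 where
  toFun x i := if i = 0 then x 5 else if i = 5 then -x 0 else if i = 1 then x 2 else if i = 2 then -x 1 else 0
  map_add' x y := by funext i; simp only [Pi.add_apply]; split_ifs <;> ring
  map_smul' c x := by
    funext i
    simp only [Pi.smul_apply, smul_eq_mul, RingHom.id_apply]
    split_ifs <;> ring


lemma gen0_mem : gen0 ∈ g2 := by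
  constructor
  · intro x y
    simp [gen0, ip7, Fin.sum_univ_seven]
    ring
  · intro x y z
    simp [gen0, φ7, Fin.sum_univ_seven]
    ring


def gen1 : V7 →ₗ[ℝ] V7 where
  toFun x i := if i = 0 then -x 6 else if i = 6 then x 0 else if i = 1 then x 4 else if i = 4 then -x 1 else 0
  map_add' x y := by funext i; simp only [Pi.add_apply]; split_ifs <;> ring
  map_smul' c x := by
    funext i
    simp only [Pi.smul_apply, smul_eq_mul, RingHom.id_apply]
    split_ifs <;> ring


lemma gen1_mem : gen1 ∈ g2 := by
  constructor
  · intro x y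
    simp [gen1, ip7, Fin.sum_univ_seven]
    ring
  · intro x y z
    simp [gen1, φ7, Fin.sum_univ_seven]
    ring


def gen2 : V7 →ₗ[ℝ] V7 where
  toFun x i := if i = 0 then -x 2 else if i = 2 then x 0 else if i = 1 then x 5 else if i = 5 then -x 1 else 0
  map_add' x y := by funext i; simp only [Pi.add_apply]; split_ifs <;> ring
  map_smul' c x := by
    funext i
    simp only [Pi.smul_apply, smul_eq_mul, RingHom.id_apply]
    split_ifs <;> ring


lemma gen2_mem : gen2 ∈ g2 := by
  constructor
  · intro x y
    simp [gen2, ip7, Fin.sum_univ_seven]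
    ring
  · intro x y z
    simp [gen2, φ7, Fin.sum_univ_seven]
    ring


def gen3 : V7 →ₗ[ℝ] V7 where
  toFun x i := if i = 0 then x 4 else if i = 4 then -x 0 else if i = 1 then x 6 else if i = 6 then -x 1 else 0
  map_add' x y := by funext i; simp only [Pi.add_apply]; split_ifs <;> ring
  map_smul' c x := by
    funext i
    simp only [Pi.smul_apply, smul_eq_mul, RingHom.id_apply]
    split_ifs <;> ring


lemma gen3_mem : gen3 ∈ g2 := by
  constructor
  · intro x y
    simp [gen3, ip7, Fin.sum_univ_seven]
    ring
  · intro x y z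
    simp [gen3, φ7, Fin.sum_univ_seven]
    ring


def gen4 : V7 →ₗ[ℝ] V7 where
  toFun x i := if i = 0 then -x 4 else if i = 4 then x 0 else if i = 2 then x 3 else if i = 3 then -x 2 else 0
  map_add' x y := by funext i; simp only [Pi.add_apply]; split_ifs <;> ring
  map_smul' c x := by
    funext i
    simp only [Pi.smul_apply, smul_eq_mul, RingHom.id_apply]
    split_ifs <;> ring


lemma gen4_mem : gen4 ∈ g2 := by
  constructor
  · intro x y
    simp [gen4, ip7, Fin.sum_univ_seven]
    ring
  · intro x y z
    simp [gen4, φ7, Fin.sum_univ_seven]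
    ring


def gen5 : V7 →ₗ[ℝ] V7 where
  toFun x i := if i = 0 then x 3 else if i = 3 then -x 0 else if i = 2 then x 4 else if i = 4 then -x 2 else 0
  map_add' x y := by funext i; simp only [Pi.add_apply]; split_ifs <;> ring
  map_smul' c x := by
    funext i
    simp only [Pi.smul_apply, smul_eq_mul, RingHom.id_apply]
    split_ifs <;> ring


lemma gen5_mem : gen5 ∈ g2 := by
  constructor
  · intro x y
    simp [gen5, ip7, Fin.sum_univ_seven]
    ring
  · intro x y z
    simp [gen5, φ7, Fin.sum_univ_seven]
    ring


def gen6 : V7 →ₗ[ℝ] V7 where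
  toFun x i := if i = 0 then x 1 else if i = 1 then -x 0 else if i = 2 then x 5 else if i = 5 then -x 2 else 0
  map_add' x y := by funext i; simp only [Pi.add_apply]; split_ifs <;> ring
  map_smul' c x := by
    funext i
    simp only [Pi.smul_apply, smul_eq_mul, RingHom.id_apply]
    split_ifs <;> ring


lemma gen6_mem : gen6 ∈ g2 := by
  constructor
  · intro x y
    simp [gen6, ip7, Fin.sum_univ_seven]
    ring
  · intro x y z
    simp [gen6, φ7, Fin.sum_univ_seven]
    ring


def gen7 : V7 →ₗ[ℝ] V7 where
  toFun x i := if i = 1 then -x 3 else if i = 3 then x 1 else if i = 2 then x 6 else if i = 6 then -x 2 else 0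
  map_add' x y := by funext i; simp only [Pi.add_apply]; split_ifs <;> ring
  map_smul' c x := by
    funext i
    simp only [Pi.smul_apply, smul_eq_mul, RingHom.id_apply]
    split_ifs <;> ring


lemma gen7_mem : gen7 ∈ g2 := by
  constructor
  · intro x y
    simp [gen7, ip7, Fin.sum_univ_seven]
    ring
  · intro x y z
    simp [gen7, φ7, Fin.sum_univ_seven]
    ring


def gen8 : V7 →ₗ[ℝ] V7 where
  toFun x i := if i = 0 then -x 2 else if i = 2 then x 0 else if i = 3 then x 4 else if i = 4 then -x 3 else 0
  map_add' x y := by funext i; simp only [Pi.add_apply]; split_ifs <;> ring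
  map_smul' c x := by
    funext i
    simp only [Pi.smul_apply, smul_eq_mul, RingHom.id_apply]
    split_ifs <;> ring


lemma gen8_mem : gen8 ∈ g2 := by
  constructor
  · intro x y
    simp [gen8, ip7, Fin.sum_univ_seven]
    ring
  · intro x y z
    simp [gen8, φ7, Fin.sum_univ_seven]
    ring


def gen9 : V7 →ₗ[ℝ] V7 where
  toFun x i := if i = 0 then x 6 else if i = 6 then -x 0 else if i = 3 then x 5 else if i = 5 then -x 3 else 0
  map_add' x y := by funext i; simp only [Pi.add_apply]; split_ifs <;> ring
  map_smul' c x := by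
    funext i
    simp only [Pi.smul_apply, smul_eq_mul, RingHom.id_apply]
    split_ifs <;> ring


lemma gen9_mem : gen9 ∈ g2 := by
  constructor
  · intro x y
    simp [gen9, ip7, Fin.sum_univ_seven]
    ring
  · intro x y z
    simp [gen9, φ7, Fin.sum_univ_seven]
    ring


def gen10 : V7 →ₗ[ℝ] V7 where
  toFun x i := if i = 0 then -x 5 else if i = 5 then x 0 else if i = 3 then x 6 else if i = 6 then -x 3 else 0
  map_add' x y := by funext i; simp only [Pi.add_apply]; split_ifs <;> ring
  map_smul' c x := by
    funext i
    simp only [Pi.smul_apply, smul_eq_mul, RingHom.id_apply]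
    split_ifs <;> ring


lemma gen10_mem : gen10 ∈ g2 := by
  constructor
  · intro x y
    simp [gen10, ip7, Fin.sum_univ_seven]
    ring
  · intro x y z
    simp [gen10, φ7, Fin.sum_univ_seven]
    ring


def gen11 : V7 →ₗ[ℝ] V7 where
  toFun x i := if i = 1 then -x 3 else if i = 3 then x 1 else if i = 4 then x 5 else if i = 5 then -x 4 else 0
  map_add' x y := by funext i; simp only [Pi.add_apply]; split_ifs <;> ring
  map_smul' c x := by
    funext i
    simp only [Pi.smul_apply, smul_eq_mul, RingHom.id_apply]
    split_ifs <;> ring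


lemma gen11_mem : gen11 ∈ g2 := by
  constructor
  · intro x y
    simp [gen11, ip7, Fin.sum_univ_seven]
    ring
  · intro x y z
    simp [gen11, φ7, Fin.sum_univ_seven]
    ring


def gen12 : V7 →ₗ[ℝ] V7 where
  toFun x i := if i = 0 then -x 1 else if i = 1 then x 0 else if i = 4 then x 6 else if i = 6 then -x 4 else 0
  map_add' x y := by funext i; simp only [Pi.add_apply]; split_ifs <;> ring
  map_smul' c x := by
    funext i
    simp only [Pi.smul_apply, smul_eq_mul, RingHom.id_apply]
    split_ifs <;> ring


lemma gen12_mem : gen12 ∈ g2 := by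
  constructor
  · intro x y
    simp [gen12, ip7, Fin.sum_univ_seven]
    ring
  · intro x y z
    simp [gen12, φ7, Fin.sum_univ_seven]
    ring


def gen13 : V7 →ₗ[ℝ] V7 where
  toFun x i := if i = 0 then x 3 else if i = 3 then -x 0 else if i = 5 then x 6 else if i = 6 then -x 5 else 0
  map_add' x y := by funext i; simp only [Pi.add_apply]; split_ifs <;> ring
  map_smul' c x := by
    funext i
    simp only [Pi.smul_apply, smul_eq_mul, RingHom.id_apply]
    split_ifs <;> ring


lemma gen13_mem : gen13 ∈ g2 := by
  constructor
  · intro x y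
    simp [gen13, ip7, Fin.sum_univ_seven]
    ring
  · intro x y z
    simp [gen13, φ7, Fin.sum_univ_seven]
    ring


lemma g2_zero (A : V7 →ₗ[ℝ] V7)
    (h1 : ∀ x y : V7, ip7 (A x) y = -ip7 x (A y))
    (h2 : ∀ x y z : V7, φ7 (A x) y z + φ7 x (A y) z + φ7 x y (A z) = 0)
    (z12 : A (e7 2) 1 = 0) (z14 : A (e7 4) 1 = 0) (z15 : A (e7 5) 1 = 0) (z16 : A (e7 6) 1 = 0) (z23 : A (e7 3) 2 = 0) (z24 : A (e7 4) 2 = 0) (z25 : A (e7 5) 2 = 0) (z26 : A (e7 6) 2 = 0) (z34 : A (e7 4) 3 = 0) (z35 : A (e7 5) 3 = 0) (z36 : A (e7 6) 3 = 0) (z45 : A (e7 5) 4 = 0) (z46 : A (e7 6) 4 = 0) (z56 : A (e7 6) 5 = 0) : A = 0 := by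
  have hs : ∀ a b : Fin 7, A (e7 a) b = -A (e7 b) a := by
    intro a b
    have h := h1 (e7 a) (e7 b)
    simpa [ip7, e7, mul_ite, mul_one, mul_zero, ite_mul, one_mul, zero_mul,
      Finset.sum_ite_eq', Finset.sum_ite_eq] using h
  have p01 : A (e7 1) 0 = 0 := by
    have h := h2 (e7 0) (e7 2) (e7 4)
    simp [φ7, e7, Fin.sum_univ_seven] at h
    linarith [h, hs 0 1, hs 2 5, z25, hs 4 6, z46]
  have p02 : A (e7 2) 0 = 0 := by
    have h := h2 (e7 0) (e7 3) (e7 5)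
    simp [φ7, e7, Fin.sum_univ_seven] at h
    linarith [h, z15, hs 0 2, hs 3 4, z34]
  have p03 : A (e7 3) 0 = 0 := by
    have h := h2 (e7 0) (e7 2) (e7 5)
    simp [φ7, e7, Fin.sum_univ_seven] at h
    linarith [h, hs 0 3, hs 2 4, z24, hs 5 6, z56]
  have p04 : A (e7 4) 0 = 0 := by
    have h := h2 (e7 0) (e7 3) (e7 6)
    simp [φ7, e7, Fin.sum_univ_seven] at h
    linarith [h, z16, z23, hs 0 4]
  have p05 : A (e7 5) 0 = 0 := by
    have h := h2 (e7 0) (e7 1) (e7 6)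
    simp [φ7, e7, Fin.sum_univ_seven] at h
    linarith [h, hs 1 2, z12, z36, hs 0 5]
  have p06 : A (e7 6) 0 = 0 := by
    have h := h2 (e7 0) (e7 1) (e7 5)
    simp [φ7, e7, Fin.sum_univ_seven] at h
    linarith [h, z35, hs 1 4, z14, hs 0 6]
  have p13 : A (e7 3) 1 = 0 := by
    have h := h2 (e7 1) (e7 2) (e7 5)
    simp [φ7, e7, Fin.sum_univ_seven] at h
    linarith [h, hs 1 3, z45, hs 2 6, z26]
  have hcol : ∀ j : Fin 7, A (e7 j) = 0 := by
    intro j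
    fin_cases j <;> funext i <;> fin_cases i
    · show A (e7 0) 0 = 0; linarith [hs 0 0]
    · show A (e7 0) 1 = 0; linarith [hs 0 1, p01]
    · show A (e7 0) 2 = 0; linarith [hs 0 2, p02]
    · show A (e7 0) 3 = 0; linarith [hs 0 3, p03]
    · show A (e7 0) 4 = 0; linarith [hs 0 4, p04]
    · show A (e7 0) 5 = 0; linarith [hs 0 5, p05]
    · show A (e7 0) 6 = 0; linarith [hs 0 6, p06]
    · show A (e7 1) 0 = 0; linarith [p01]
    · show A (e7 1) 1 = 0; linarith [hs 1 1]
    · show A (e7 1) 2 = 0; linarith [hs 1 2, z12]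
    · show A (e7 1) 3 = 0; linarith [hs 1 3, p13]
    · show A (e7 1) 4 = 0; linarith [hs 1 4, z14]
    · show A (e7 1) 5 = 0; linarith [hs 1 5, z15]
    · show A (e7 1) 6 = 0; linarith [hs 1 6, z16]
    · show A (e7 2) 0 = 0; linarith [p02]
    · show A (e7 2) 1 = 0; linarith [z12]
    · show A (e7 2) 2 = 0; linarith [hs 2 2]
    · show A (e7 2) 3 = 0; linarith [hs 2 3, z23]
    · show A (e7 2) 4 = 0; linarith [hs 2 4, z24]
    · show A (e7 2) 5 = 0; linarith [hs 2 5, z25]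
    · show A (e7 2) 6 = 0; linarith [hs 2 6, z26]
    · show A (e7 3) 0 = 0; linarith [p03]
    · show A (e7 3) 1 = 0; linarith [p13]
    · show A (e7 3) 2 = 0; linarith [z23]
    · show A (e7 3) 3 = 0; linarith [hs 3 3]
    · show A (e7 3) 4 = 0; linarith [hs 3 4, z34]
    · show A (e7 3) 5 = 0; linarith [hs 3 5, z35]
    · show A (e7 3) 6 = 0; linarith [hs 3 6, z36]
    · show A (e7 4) 0 = 0; linarith [p04]
    · show A (e7 4) 1 = 0; linarith [z14]
    · show A (e7 4) 2 = 0; linarith [z24]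
    · show A (e7 4) 3 = 0; linarith [z34]
    · show A (e7 4) 4 = 0; linarith [hs 4 4]
    · show A (e7 4) 5 = 0; linarith [hs 4 5, z45]
    · show A (e7 4) 6 = 0; linarith [hs 4 6, z46]
    · show A (e7 5) 0 = 0; linarith [p05]
    · show A (e7 5) 1 = 0; linarith [z15]
    · show A (e7 5) 2 = 0; linarith [z25]
    · show A (e7 5) 3 = 0; linarith [z35]
    · show A (e7 5) 4 = 0; linarith [z45]
    · show A (e7 5) 5 = 0; linarith [hs 5 5]
    · show A (e7 5) 6 = 0; linarith [hs 5 6, z56]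
    · show A (e7 6) 0 = 0; linarith [p06]
    · show A (e7 6) 1 = 0; linarith [z16]
    · show A (e7 6) 2 = 0; linarith [z26]
    · show A (e7 6) 3 = 0; linarith [z36]
    · show A (e7 6) 4 = 0; linarith [z46]
    · show A (e7 6) 5 = 0; linarith [z56]
    · show A (e7 6) 6 = 0; linarith [hs 6 6]
  apply LinearMap.ext
  intro x
  have hx : x = ∑ j : Fin 7, x j • e7 j := by
    funext k
    simp [e7, Finset.sum_apply, Pi.smul_apply, smul_eq_mul, mul_ite, mul_one, mul_zero,
      Finset.sum_ite_eq]
  rw [hx, map_sum]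
  simp [map_smul, hcol]


def π14 : g2 →ₗ[ℝ] (Fin 14 → ℝ) where
  toFun A l := if l = 0 then ((A : V7 →ₗ[ℝ] V7) (e7 2)) 1 else if l = 1 then ((A : V7 →ₗ[ℝ] V7) (e7 4)) 1 else if l = 2 then ((A : V7 →ₗ[ℝ] V7) (e7 5)) 1 else if l = 3 then ((A : V7 →ₗ[ℝ] V7) (e7 6)) 1 else if l = 4 then ((A : V7 →ₗ[ℝ] V7) (e7 3)) 2 else if l = 5 then ((A : V7 →ₗ[ℝ] V7) (e7 4)) 2 else if l = 6 then ((A : V7 →ₗ[ℝ] V7) (e7 5)) 2 else if l = 7 then ((A : V7 →ₗ[ℝ] V7) (e7 6)) 2 else if l = 8 then ((A : V7 →ₗ[ℝ] V7) (e7 4)) 3 else if l = 9 then ((A : V7 →ₗ[ℝ] V7) (e7 5)) 3 else if l = 10 then ((A : V7 →ₗ[ℝ] V7) (e7 6)) 3 else if l = 11 then ((A : V7 →ₗ[ℝ] V7) (e7 5)) 4 else if l = 12 then ((A : V7 →ₗ[ℝ] V7) (e7 6)) 4 else if l = 13 then ((A : V7 →ₗ[ℝ] V7) (e7 6)) 5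 else 0
  map_add' A B := by funext l; fin_cases l <;> rfl
  map_smul' c A := by funext l; fin_cases l <;> rfl


lemma g2_mem_iff (A : V7 →ₗ[ℝ] V7) : A ∈ g2 ↔
    (∀ x y : V7, ip7 (A x) y = -ip7 x (A y)) ∧
    (∀ x y z : V7, φ7 (A x) y z + φ7 x (A y) z + φ7 x y (A z) = 0) := Iff.rfl


/-- `g₂` has dimension 14 as a real vector space. -/
theorem g2_finrank : Module.finrank ℝ g2 = 14 := by
  have hinj : Function.Injective π14 := by
    rw [injective_iff_map_eq_zero]
    intro A hA
    have hmem := A.2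
    rw [g2_mem_iff] at hmem
    have z12 : (A : V7 →ₗ[ℝ] V7) (e7 2) 1 = 0 := by
      have := congrFun hA 0
      simpa [π14] using this
    have z14 : (A : V7 →ₗ[ℝ] V7) (e7 4) 1 = 0 := by
      have := congrFun hA 1
      simpa [π14] using this
    have z15 : (A : V7 →ₗ[ℝ] V7) (e7 5) 1 = 0 := by
      have := congrFun hA 2
      simpa [π14] using this
    have z16 : (A : V7 →ₗ[ℝ] V7) (e7 6) 1 = 0 := by
      have := congrFun hA 3
      simpa [π14] using this
    have z23 : (A : V7 →ₗ[ℝ] V7) (e7 3) 2 = 0 := by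
      have := congrFun hA 4
      simpa [π14] using this
    have z24 : (A : V7 →ₗ[ℝ] V7) (e7 4) 2 = 0 := by
      have := congrFun hA 5
      simpa [π14] using this
    have z25 : (A : V7 →ₗ[ℝ] V7) (e7 5) 2 = 0 := by
      have := congrFun hA 6
      simpa [π14] using this
    have z26 : (A : V7 →ₗ[ℝ] V7) (e7 6) 2 = 0 := by
      have := congrFun hA 7
      simpa [π14] using this
    have z34 : (A : V7 →ₗ[ℝ] V7) (e7 4) 3 = 0 := by
      have := congrFun hA 8
      simpa [π14] using this
    have z35 : (A : V7 →ₗ[ℝ] V7) (e7 5) 3 = 0 := by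
      have := congrFun hA 9
      simpa [π14] using this
    have z36 : (A : V7 →ₗ[ℝ] V7) (e7 6) 3 = 0 := by
      have := congrFun hA 10
      simpa [π14] using this
    have z45 : (A : V7 →ₗ[ℝ] V7) (e7 5) 4 = 0 := by
      have := congrFun hA 11
      simpa [π14] using this
    have z46 : (A : V7 →ₗ[ℝ] V7) (e7 6) 4 = 0 := by
      have := congrFun hA 12
      simpa [π14] using this
    have z56 : (A : V7 →ₗ[ℝ] V7) (e7 6) 5 = 0 := by
      have := congrFun hA 13
      simpa [π14] using this
    exact Subtype.ext (g2_zero _ hmem.1 hmem.2 z12 z14 z15 z16 z23 z24 z25 z26 z34 z35 z36 z45 z46 z56)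
  have hsurj : Function.Surjective π14 := by
    intro d
    refine ⟨d 0 • (⟨gen0, gen0_mem⟩ : g2) + d 1 • (⟨gen1, gen1_mem⟩ : g2) + d 2 • (⟨gen2, gen2_mem⟩ : g2) + d 3 • (⟨gen3, gen3_mem⟩ : g2) + d 4 • (⟨gen4, gen4_mem⟩ : g2) + d 5 • (⟨gen5, gen5_mem⟩ : g2) + d 6 • (⟨gen6, gen6_mem⟩ : g2) + d 7 • (⟨gen7, gen7_mem⟩ : g2) + d 8 • (⟨gen8, gen8_mem⟩ : g2) + d 9 • (⟨gen9, gen9_mem⟩ : g2) + d 10 • (⟨gen10, gen10_mem⟩ : g2) + d 11 • (⟨gen11, gen11_mem⟩ : g2) + d 12 • (⟨gen12, gen12_mem⟩ : g2) + d 13 • (⟨gen13, gen13_mem⟩ : g2), ?_⟩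
    funext l
    fin_cases l <;>
      simp [π14, gen0, gen1, gen2, gen3, gen4, gen5, gen6, gen7, gen8, gen9, gen10, gen11, gen12, gen13, e7, Submodule.coe_add, Submodule.coe_smul,
        LinearMap.add_apply, LinearMap.smul_apply, Pi.add_apply, Pi.smul_apply, smul_eq_mul]
  have e := LinearEquiv.ofBijective π14 ⟨hinj, hsurj⟩
  rw [e.finrank_eq]
  simp [Module.finrank_pi]
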